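/- Consider a linear structural causal model with interventions on the response, in second-moment form: fix d ≥ 1, γ, β ∈ ℝ^d, B ∈ ℝ^{d×d}, a diagonal matrix Σ ∈ ℝ^{d×d} with positive diagonal entries, σ² > 0, a nonempty set E of environments, and α : E → ℝ^d; set PE := {j : ∃ e ∈ E, α(e)_j ≠ 0}, assume acyclicity (there is an injective function r from {1,…,d} ∪ {Y} to ℕ with B_{ij} ≠ 0 ⟹ r(j) < r(i), γ_i ≠ 0 ⟹ r(Y) < r(i), and (β_j ≠ 0 or j ∈ PE) ⟹ r(j) < r(Y)), and define C(e) := γ (β + α(e))^⊤ + B. Then I − C(e) is invertible for every e ∈ E; the matrix Σ_X(e) := (I − C(e))^{-1}(Σ + σ² γ γ^⊤)(I − C(e))^{-⊤} is positive definite; and, setting Σ_{XY}(e) := Σ_X(e)(β + α(e)) + σ² (I − C(e))^{-1} γ, for every subset S with PE ⊆ S ⊆ {1,…,d} there exist λ_Y ∈ ℝ and η_Y ∈ ℝ^d, not depending on e, such that for every e ∈ E the vector θ_S(e) := ((Σ_X(e))_{S,S})^{-1} (Σ_{XY}(e))_S, extended by zeros to a vector in ℝ^d, equals λ_Y (β +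 α(e)) + η_Y. -/

import Mathlib

set_option linter.unusedSectionVars false
set_option linter.unusedVariables false

open Matrix Finset

namespace Stmt9Aux

variable {n : Type*} [Fintype n] [DecidableEq n]

lemma vmv_mulVec (a b x : n → ℝ) : vecMulVec a b *ᵥ x = (b ⬝ᵥ x) • a := by
  ext i
  simp only [mulVec, dotProduct, vecMulVec_apply, Pi.smul_apply, smul_eq_mul, Finset.sum_mul]
  exact Finset.sum_congr rfl fun j _ => by ring

lemma mul_vmv (M : Matrix n n ℝ) (a b : n → ℝ) :
    M * vecMulVec a b = vecMulVec (M *ᵥ a) b := by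
  ext i j
  simp only [Matrix.mul_apply, vecMulVec_apply, mulVec, dotProduct, Finset.sum_mul]
  exact Finset.sum_congr rfl fun k _ => by ring

lemma vmv_mul (M : Matrix n n ℝ) (a b : n → ℝ) :
    vecMulVec a b * M = vecMulVec a (b ᵥ* M) := by
  ext i j
  simp only [Matrix.mul_apply, vecMulVec_apply, vecMul, dotProduct, Finset.mul_sum]
  exact Finset.sum_congr rfl fun k _ => by ring

lemma vmv_transpose (a b : n → ℝ) : (vecMulVec a b)ᵀ = vecMulVec b a := by
  ext i j; simp [vecMulVec_apply, mul_comm]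

lemma vmv_mul_vmv (a b c e : n → ℝ) :
    vecMulVec a b * vecMulVec c e = (b ⬝ᵥ c) • vecMulVec a e := by
  rw [mul_vmv, vmv_mulVec]
  ext i j
  simp [vecMulVec_apply, smul_eq_mul]
  ring

lemma bt_one_sub {P : Matrix n n ℝ} {ρ : n → ℕ} (hρ : Function.Injective ρ)
    (h : ∀ i j, P i j ≠ 0 → ρ j < ρ i) :
    BlockTriangular (1 - P) (fun i => OrderDual.toDual (ρ i)) := by
  intro i j hij
  have hij' : ρ i < ρ j := hij
  have hne : i ≠ j := fun hh => by subst hh; exact lt_irrefl _ hij'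
  have hP : P i j = 0 := by
    by_contra hP
    exact absurd (h i j hP) (by omega)
  simp [Matrix.sub_apply, Matrix.one_apply_ne hne, hP]

lemma det_one_sub_tri {P : Matrix n n ℝ} {ρ : n → ℕ} (hρ : Function.Injective ρ)
    (h : ∀ i j, P i j ≠ 0 → ρ j < ρ i) : (1 - P).det = 1 := by
  rw [(bt_one_sub hρ h).det]
  refine Finset.prod_eq_one fun a ha => ?_
  obtain ⟨i, -, hi⟩ := Finset.mem_image.mp ha
  haveI : Unique {k // (fun i => OrderDual.toDual (ρ i)) k = a} :=
    ⟨⟨⟨i, hi⟩⟩, by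
      rintro ⟨x, hx⟩
      have : ρ x = ρ i := OrderDual.toDual_inj.mp (hx.trans hi.symm)
      exact Subtype.ext (hρ this)⟩
  rw [Matrix.det_unique]
  have hP : P ((default : {k // (fun i => OrderDual.toDual (ρ i)) k = a}) : n)
      ((default : {k // (fun i => OrderDual.toDual (ρ i)) k = a}) : n) = 0 := by
    by_contra hP
    exact absurd (h _ _ hP) (lt_irrefl _)
  simp [Matrix.toSquareBlock_def, Matrix.sub_apply, hP]

lemma isUnit_one_sub_tri {P : Matrix n n ℝ} {ρ : n → ℕ} (hρ : Function.Injective ρ)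
    (h : ∀ i j, P i j ≠ 0 → ρ j < ρ i) : IsUnit (1 - P) := by
  rw [Matrix.isUnit_iff_isUnit_det, det_one_sub_tri hρ h]
  exact isUnit_one

lemma inv_one_sub_tri_support {P : Matrix n n ℝ} {ρ : n → ℕ} (hρ : Function.Injective ρ)
    (h : ∀ i j, P i j ≠ 0 → ρ j < ρ i) :
    ∀ i j, (1 - P)⁻¹ i j ≠ 0 → i = j ∨ ρ j < ρ i := by
  haveI : Invertible (1 - P) :=
    (1 - P).invertibleOfIsUnitDet (by rw [det_one_sub_tri hρ h]; exact isUnit_one)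
  intro i j hij
  by_contra hcon
  push_neg at hcon
  obtain ⟨hne, hle⟩ := hcon
  have hlt : ρ i < ρ j :=
    lt_of_le_of_ne hle (fun hh => hne (hρ hh))
  exact hij (blockTriangular_inv_of_blockTriangular (bt_one_sub hρ h) hlt)

lemma posDef_conj {D A : Matrix n n ℝ} (hD : D.PosDef) (hA : IsUnit A) :
    (A * D * Aᵀ).PosDef := by
  rw [Matrix.posDef_iff_dotProduct_mulVec]
  constructor
  · have := Matrix.isHermitian_mul_mul_conjTranspose A hD.1
    have hAt : Aᴴ = Aᵀ := rfl
    rwa [hAt] at this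
  · intro x hx
    have hAT : IsUnit Aᵀ := (Matrix.isUnit_transpose (A := A)).mpr hA
    have hy : Aᵀ *ᵥ x ≠ 0 := by
      intro hc
      apply hx
      have hinj := Matrix.mulVec_injective_iff_isUnit.mpr hAT
      have : Aᵀ *ᵥ x = Aᵀ *ᵥ 0 := by rw [hc, Matrix.mulVec_zero]
      exact hinj this
    have := hD.dotProduct_mulVec_pos hy
    calc 0 < star (Aᵀ *ᵥ x) ⬝ᵥ D *ᵥ (Aᵀ *ᵥ x) := this
    _ = star x ⬝ᵥ (A * D * Aᵀ) *ᵥ x := by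
        rw [← Matrix.mulVec_mulVec, ← Matrix.mulVec_mulVec]
        rw [show star (Aᵀ *ᵥ x) = Aᵀ *ᵥ x from rfl, show (star x : n → ℝ) = x from rfl]
        rw [Matrix.mulVec_transpose, ← Matrix.dotProduct_mulVec]

end Stmt9Aux

namespace Stmt9Aux

variable {n : Type*} [Fintype n] [DecidableEq n]

lemma sum_ext (S : Finset n) (x : {k // k ∈ S} → ℝ) (v : n → ℝ) :
    (fun j => if h : j ∈ S then x ⟨j, h⟩ else 0) ⬝ᵥ v = ∑ i : {k // k ∈ S}, x i * v i := by
  have h1 : ∑ i : {k // k ∈ S}, x i * v i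
      = ∑ j ∈ S, (if h : j ∈ S then x ⟨j, h⟩ else 0) * v j := by
    rw [← Finset.sum_coe_sort S (fun j => (if h : j ∈ S then x ⟨j, h⟩ else 0) * v j)]
    exact Finset.sum_congr rfl fun i _ => by rw [dif_pos i.2]
  rw [h1, dotProduct]
  exact (Finset.sum_subset (Finset.subset_univ S) (fun k _ hk => by rw [dif_neg hk, zero_mul])).symm

lemma posDef_submatrix {M : Matrix n n ℝ} (hM : M.PosDef) (S : Finset n) :
    (M.submatrix (Subtype.val : {k // k ∈ S} → n) Subtype.val).PosDef := by
  rw [Matrix.posDef_iff_dotProduct_mulVec]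
  constructor
  · show (M.submatrix _ _)ᴴ = _
    rw [Matrix.conjTranspose_submatrix, hM.1]
  · intro x hx
    set y : n → ℝ := fun j => if h : j ∈ S then x ⟨j, h⟩ else 0 with hy
    have hy0 : y ≠ 0 := by
      intro hc
      apply hx
      funext i
      have := congrFun hc i.val
      simpa [hy, dif_pos i.2] using this
    have key : star x ⬝ᵥ ((M.submatrix (Subtype.val : {k // k ∈ S} → n) Subtype.val) *ᵥ x)
        = star y ⬝ᵥ (M *ᵥ y) := by
      have hsy : (star y : n → ℝ) = y := by
        funext j; simp
      have hsx : (star x : {k // k ∈ S} → ℝ) = x := by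
        funext j; simp
      rw [hsy, hsx]
      have hmv : ∀ i : {k // k ∈ S},
          ((M.submatrix (Subtype.val : {k // k ∈ S} → n) Subtype.val) *ᵥ x) i
            = (M *ᵥ y) i.val := by
        intro i
        show (fun k : {k // k ∈ S} => M i.val k.val) ⬝ᵥ x = M i.val ⬝ᵥ y
        rw [dotProduct_comm (M i.val) y, hy, sum_ext S x (M i.val)]
        exact Finset.sum_congr rfl fun k _ => by
          simp [dotProduct, mul_comm]
      have h2 : y ⬝ᵥ (M *ᵥ y) = ∑ i : {k // k ∈ S}, x i * (M *ᵥ y) i.val := by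
        rw [hy, sum_ext S x (M *ᵥ y)]
      rw [h2, dotProduct]
      exact Finset.sum_congr rfl fun i _ => by rw [hmv i]
    rw [key]
    exact hM.dotProduct_mulVec_pos hy0

end Stmt9Aux

open Matrix

/-- First matching property, in second-moment form. For the acyclic
linear SCM with interventions on the response, `C(e) = γ (β + α(e))ᵀ + B`,
`Σ_X(e) = (I − C(e))⁻¹ (Σ + σ² γ γᵀ) (I − C(e))⁻ᵀ`, and
`Σ_{XY}(e) = Σ_X(e)(β + α(e)) + σ² (I − C(e))⁻¹ γ`: `I − C(e)` is invertible for every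
`e`, `Σ_X(e)` is positive definite, and for every `S ⊇ PE` the zero-extension of the
population coefficient `θ_S(e) = ((Σ_X(e))_{S,S})⁻¹ (Σ_{XY}(e))_S` of the linear MMSE
prediction of `Y` from `X_S` equals `λ_Y (β + α(e)) + η_Y` for some environment-invariant
`λ_Y ∈ ℝ`, `η_Y ∈ ℝ^d`. -/
theorem stmt_9 (d : ℕ) (hd : 1 ≤ d)
    (γ β : Fin d → ℝ) (B : Matrix (Fin d) (Fin d) ℝ)
    (σdiag : Fin d → ℝ) (hσdiag : ∀ i, 0 < σdiag i)
    (σ2 : ℝ) (hσ2 : 0 < σ2)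
    (E : Type*) [Nonempty E] (α : E → Fin d → ℝ)
    (PE : Set (Fin d)) (hPE : PE = {j | ∃ e, α e j ≠ 0})
    (r : Fin d ⊕ Unit → ℕ) (hrinj : Function.Injective r)
    (hrB : ∀ i j, B i j ≠ 0 → r (Sum.inl j) < r (Sum.inl i))
    (hrγ : ∀ i, γ i ≠ 0 → r (Sum.inr ()) < r (Sum.inl i))
    (hrβ : ∀ j, (β j ≠ 0 ∨ j ∈ PE) → r (Sum.inl j) < r (Sum.inr ()))
    (C : E → Matrix (Fin d) (Fin d) ℝ)
    (hC : ∀ e, C e = vecMulVec γ (β + α e) + B)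
    (SX : E → Matrix (Fin d) (Fin d) ℝ)
    (hSX : ∀ e, SX e =
      (1 - C e)⁻¹ * (Matrix.diagonal σdiag + σ2 • vecMulVec γ γ) * ((1 - C e)⁻¹)ᵀ)
    (SXY : E → Fin d → ℝ)
    (hSXY : ∀ e, SXY e = SX e *ᵥ (β + α e) + σ2 • ((1 - C e)⁻¹ *ᵥ γ)) :
    (∀ e, IsUnit (1 - C e)) ∧
    (∀ e, (SX e).PosDef) ∧
    (∀ S : Finset (Fin d), (∀ j, j ∈ PE → j ∈ S) →
      ∃ (lamY : ℝ) (etaY : Fin d → ℝ), ∀ e,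
        (fun j => if hj : j ∈ S then
            (((SX e).submatrix (Subtype.val : {x // x ∈ S} → Fin d)
                (Subtype.val : {x // x ∈ S} → Fin d))⁻¹ *ᵥ
              (fun i : {x // x ∈ S} => SXY e i.val)) ⟨j, hj⟩
          else 0) = lamY • (β + α e) + etaY) := by
  classical
  set ρ : Fin d → ℕ := fun i => r (Sum.inl i) with hρdef
  set rY : ℕ := r (Sum.inr ()) with hrYdef
  have hρinj : Function.Injective ρ := fun i j hij => Sum.inl_injective (hrinj hij)
  -- support facts
  have hαzero : ∀ (e : E) j, j ∉ PE → α e j = 0 := by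
    intro e j hj
    by_contra hne
    exact hj (hPE ▸ ⟨e, hne⟩)
  have hbsupp : ∀ (e : E) j, (β + α e) j ≠ 0 → ρ j < rY := by
    intro e j hj
    by_cases hβ : β j ≠ 0
    · exact hrβ j (Or.inl hβ)
    · have : j ∈ PE := by
        by_contra hc
        push_neg at hβ
        exact hj (by simp [hβ, hαzero e j hc])
      exact hrβ j (Or.inr this)
  -- the matrix u = (1-B)⁻¹
  have hBunit : IsUnit (1 - B) := Stmt9Aux.isUnit_one_sub_tri hρinj hrB
  have hBdet : IsUnit (1 - B).det := (Matrix.isUnit_iff_isUnit_det _).mp hBunit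
  set u : Matrix (Fin d) (Fin d) ℝ := (1 - B)⁻¹ with hudef
  have hu1 : (1 - B) * u = 1 := Matrix.mul_nonsing_inv _ hBdet
  have husupp : ∀ i j, u i j ≠ 0 → i = j ∨ ρ j < ρ i :=
    Stmt9Aux.inv_one_sub_tri_support hρinj hrB
  set g : Fin d → ℝ := u *ᵥ γ with hgdef
  have hg : ∀ j, ρ j ≤ rY → g j = 0 := by
    intro j hj
    show (fun k => u j k) ⬝ᵥ γ = 0
    apply Finset.sum_eq_zero
    intro k _
    by_cases hγk : γ k = 0
    · simp [hγk]
    · have h1 : rY < ρ k := hrγ k hγk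
      have h2 : u j k = 0 := by
        by_contra h2
        rcases husupp j k h2 with h | h
        · subst h; omega
        · omega
      simp [h2]
  have hgPE : ∀ j, j ∈ PE → g j = 0 := fun j hj => hg j (le_of_lt (hrβ j (Or.inr hj)))
  have hbg : ∀ e, (β + α e) ⬝ᵥ g = 0 := by
    intro e
    apply Finset.sum_eq_zero
    intro j _
    by_cases hbj : (β + α e) j = 0
    · rw [hbj, zero_mul]
    · rw [hg j (le_of_lt (hbsupp e j hbj)), mul_zero]
  have hgb : ∀ e, g ⬝ᵥ (β + α e) = 0 := fun e => by
    rw [dotProduct_comm]; exact hbg e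
  have hgα : ∀ e, g ⬝ᵥ α e = 0 := by
    intro e
    apply Finset.sum_eq_zero
    intro j _
    by_cases hj : j ∈ PE
    · rw [hgPE j hj, zero_mul]
    · rw [hαzero e j hj, mul_zero]
  -- D and N
  set D : Matrix (Fin d) (Fin d) ℝ := Matrix.diagonal σdiag + σ2 • vecMulVec γ γ with hDdef
  set N : Matrix (Fin d) (Fin d) ℝ := u * D * uᵀ with hNdef
  -- inverse formula
  have hγg : (1 - B) *ᵥ g = γ := by
    rw [hgdef, Matrix.mulVec_mulVec, hu1, Matrix.one_mulVec]
  have hAinv : ∀ e, (1 - C e) * (u + vecMulVec g ((β + α e) ᵥ* u)) = 1 := by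
    intro e
    have h1 : 1 - C e = (1 - B) - vecMulVec γ (β + α e) := by
      rw [hC e]; abel
    have e1 : (1 - B) * vecMulVec g ((β + α e) ᵥ* u) = vecMulVec γ ((β + α e) ᵥ* u) := by
      rw [Stmt9Aux.mul_vmv, hγg]
    have e2 : vecMulVec γ (β + α e) * u = vecMulVec γ ((β + α e) ᵥ* u) :=
      Stmt9Aux.vmv_mul u γ (β + α e)
    have e3 : vecMulVec γ (β + α e) * vecMulVec g ((β + α e) ᵥ* u) = 0 := by
      rw [Stmt9Aux.vmv_mul_vmv, hbg, zero_smul]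
    rw [h1, Matrix.sub_mul, Matrix.mul_add, Matrix.mul_add, hu1, e1, e2, e3, add_zero]
    abel
  have hCunit : ∀ e, IsUnit (1 - C e) := fun e => (Matrix.isUnit_iff_isUnit_det _).mpr (Matrix.isUnit_det_of_right_inverse (hAinv e))
  have hAe : ∀ e, (1 - C e)⁻¹ = u + vecMulVec g ((β + α e) ᵥ* u) := fun e =>
    Matrix.inv_eq_right_inv (hAinv e)
  -- positive definiteness
  have hD : D.PosDef := by
    apply Matrix.PosDef.add_posSemidef (Matrix.PosDef.diagonal hσdiag)
    rw [Matrix.posSemidef_iff_dotProduct_mulVec]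
    constructor
    · show (σ2 • vecMulVec γ γ)ᴴ = σ2 • vecMulVec γ γ
      have : (vecMulVec γ γ)ᴴ = (vecMulVec γ γ)ᵀ := rfl
      rw [Matrix.conjTranspose_smul, this, Stmt9Aux.vmv_transpose]
      norm_num
    · intro x
      have h1 : (σ2 • vecMulVec γ γ) *ᵥ x = σ2 • ((γ ⬝ᵥ x) • γ) := by
        rw [Matrix.smul_mulVec, Stmt9Aux.vmv_mulVec]
      rw [h1]
      have hsx : (star x : Fin d → ℝ) = x := by funext j; simp
      rw [hsx]
      have h2 : x ⬝ᵥ (σ2 • ((γ ⬝ᵥ x) • γ)) = σ2 * ((γ ⬝ᵥ x) * (x ⬝ᵥ γ)) := by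
        rw [dotProduct_smul, dotProduct_smul]
        simp [mul_assoc]
      rw [h2, dotProduct_comm x γ]
      exact mul_nonneg hσ2.le (mul_self_nonneg _)
  have hSXpd : ∀ e, (SX e).PosDef := by
    intro e
    rw [hSX e]
    exact Stmt9Aux.posDef_conj hD (Matrix.isUnit_nonsing_inv_iff.mpr (hCunit e))
  refine ⟨hCunit, hSXpd, ?_⟩
  -- main part
  intro S hS
  -- generic mulVec identities
  have hq : ∀ e, (β + α e) ᵥ* u = uᵀ *ᵥ (β + α e) := fun e => (Matrix.mulVec_transpose u _).symm
  have huDx : ∀ x : Fin d → ℝ, u *ᵥ (D *ᵥ (uᵀ *ᵥ x)) = N *ᵥ x := by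
    intro x
    rw [Matrix.mulVec_mulVec, Matrix.mulVec_mulVec, hNdef, Matrix.mul_assoc]
  have hbuDot : ∀ bv y : Fin d → ℝ, (uᵀ *ᵥ bv) ⬝ᵥ y = bv ⬝ᵥ (u *ᵥ y) := by
    intro bv y
    rw [Matrix.mulVec_transpose, Matrix.dotProduct_mulVec]
  have hSXmv : ∀ e (x : Fin d → ℝ), SX e *ᵥ x = N *ᵥ x + (g ⬝ᵥ x) • (N *ᵥ (β + α e))
      + ((β + α e) ⬝ᵥ (N *ᵥ x) + (g ⬝ᵥ x) * ((β + α e) ⬝ᵥ (N *ᵥ (β + α e)))) • g := by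
    intro e x
    rw [hSX e, hAe e, hq e]
    generalize β + α e = be
    rw [← Matrix.mulVec_mulVec, ← Matrix.mulVec_mulVec]
    simp only [Matrix.transpose_add, Stmt9Aux.vmv_transpose, Matrix.add_mulVec,
      Stmt9Aux.vmv_mulVec, Matrix.mulVec_add, Matrix.mulVec_smul, dotProduct_add,
      dotProduct_smul, hbuDot, huDx, smul_eq_mul]
    funext i
    simp only [Pi.add_apply, Pi.smul_apply, smul_eq_mul]
    ring
  have hAγ : ∀ e, (1 - C e)⁻¹ *ᵥ γ = g := by
    intro e
    rw [hAe e, hq e, Matrix.add_mulVec, Stmt9Aux.vmv_mulVec, hbuDot, ← hgdef, hbg e,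
      zero_smul, add_zero]
  have hres : ∀ e (v : Fin d → ℝ), SXY e - SX e *ᵥ v =
      N *ᵥ ((1 - g ⬝ᵥ v) • (β + α e) - v)
        + ((β + α e) ⬝ᵥ (N *ᵥ ((1 - g ⬝ᵥ v) • (β + α e) - v)) + σ2) • g := by
    intro e v
    rw [hSXY e, hAγ e, hSXmv e (β + α e), hSXmv e v]
    rw [Matrix.mulVec_sub, Matrix.mulVec_smul, dotProduct_sub, dotProduct_smul]
    rw [hgb e]
    funext i
    simp only [Pi.add_apply, Pi.sub_apply, Pi.smul_apply, smul_eq_mul]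
    ring
  -- submatrix machinery
  set Msub : E → Matrix {x // x ∈ S} {x // x ∈ S} ℝ :=
    fun e => (SX e).submatrix Subtype.val Subtype.val with hMsubdef
  have hMdet : ∀ e, IsUnit (Msub e).det := fun e =>
    (Matrix.isUnit_iff_isUnit_det _).mp (Stmt9Aux.posDef_submatrix (hSXpd e) S).isUnit
  set t : E → Fin d → ℝ := fun e j => if hj : j ∈ S then
      ((Msub e)⁻¹ *ᵥ (fun i : {x // x ∈ S} => SXY e i.val)) ⟨j, hj⟩ else 0 with htdef
  have hsum : ∀ e (w : Fin d → ℝ), (∀ j, j ∉ S → w j = 0) → ∀ i : {x // x ∈ S},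
      (Msub e *ᵥ fun k : {x // x ∈ S} => w k.val) i = (SX e *ᵥ w) i.val := by
    intro e w hw0 i
    have h1 : (Msub e *ᵥ fun k : {x // x ∈ S} => w k.val) i
        = ∑ k : {x // x ∈ S}, SX e i.val k.val * w k.val := by
      simp [hMsubdef, Matrix.mulVec, dotProduct]
    have h2 : (SX e *ᵥ w) i.val = ∑ k, SX e i.val k * w k := by
      simp [Matrix.mulVec, dotProduct]
    rw [h1, h2, Finset.sum_coe_sort S (fun k => SX e i.val k * w k)]
    exact Finset.sum_subset (Finset.subset_univ S) (fun k _ hk => by rw [hw0 k hk, mul_zero])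
  have hchar : ∀ e (w : Fin d → ℝ), (∀ j, j ∉ S → w j = 0) →
      (∀ i : {x // x ∈ S}, (SX e *ᵥ w) i.val = SXY e i.val) → t e = w := by
    intro e w hw0 hweq
    have hws : Msub e *ᵥ (fun k : {x // x ∈ S} => w k.val)
        = fun i : {x // x ∈ S} => SXY e i.val := by
      funext i; rw [hsum e w hw0 i, hweq i]
    funext j
    by_cases hj : j ∈ S
    · have hinv : (Msub e)⁻¹ *ᵥ (fun i : {x // x ∈ S} => SXY e i.val)
          = fun k : {x // x ∈ S} => w k.val := by
        rw [← hws, Matrix.mulVec_mulVec, Matrix.nonsing_inv_mul _ (hMdet e),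
          Matrix.one_mulVec]
      simp only [htdef, dif_pos hj]
      rw [hinv]
    · simp only [htdef, dif_neg hj]
      exact (hw0 j hj).symm
  obtain ⟨e₀⟩ := ‹Nonempty E›
  have ht00 : ∀ j, j ∉ S → t e₀ j = 0 := fun j hj => by simp only [htdef, dif_neg hj]
  have ht0S : (fun k : {x // x ∈ S} => t e₀ k.val)
      = (Msub e₀)⁻¹ *ᵥ (fun i : {x // x ∈ S} => SXY e₀ i.val) := by
    funext k
    simp only [htdef, dif_pos k.2, Subtype.coe_eta]
  have ht0eq : ∀ i : {x // x ∈ S}, (SX e₀ *ᵥ t e₀) i.val = SXY e₀ i.val := by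
    intro i
    rw [← hsum e₀ (t e₀) ht00 i, ht0S, Matrix.mulVec_mulVec,
      Matrix.mul_nonsing_inv _ (hMdet e₀), Matrix.one_mulVec]
  set c₀ : Fin d → ℝ := (1 - g ⬝ᵥ t e₀) • (β + α e₀) - t e₀ with hc0def
  have hres0 : ∀ i : {x // x ∈ S},
      (N *ᵥ c₀) i.val + ((β + α e₀) ⬝ᵥ (N *ᵥ c₀) + σ2) * g i.val = 0 := by
    intro i
    have h1 := congrFun (hres e₀ (t e₀)) i.val
    rw [← hc0def] at h1
    simp only [Pi.sub_apply, Pi.add_apply, Pi.smul_apply, smul_eq_mul] at h1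
    rw [ht0eq i] at h1
    linarith
  have hNc0PE : ∀ j, j ∈ PE → (N *ᵥ c₀) j = 0 := by
    intro j hj
    have h1 := hres0 ⟨j, hS j hj⟩
    simpa [hgPE j hj] using h1
  have hbNc0 : ∀ e, (β + α e) ⬝ᵥ (N *ᵥ c₀) = β ⬝ᵥ (N *ᵥ c₀) := by
    intro e
    rw [add_dotProduct]
    have hz : α e ⬝ᵥ (N *ᵥ c₀) = 0 := Finset.sum_eq_zero fun j _ => by
      by_cases hj : j ∈ PE
      · rw [hNc0PE j hj, mul_zero]
      · rw [hαzero e j hj, zero_mul]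
    rw [hz, add_zero]
  refine ⟨1 - g ⬝ᵥ t e₀, t e₀ - (1 - g ⬝ᵥ t e₀) • (β + α e₀), ?_⟩
  intro e
  set w : Fin d → ℝ := (1 - g ⬝ᵥ t e₀) • (β + α e)
      + (t e₀ - (1 - g ⬝ᵥ t e₀) • (β + α e₀)) with hwdef
  have hw0 : ∀ j, j ∉ S → w j = 0 := by
    intro j hj
    have hjPE : j ∉ PE := fun h => hj (hS j h)
    have hβα : ∀ e', (β + α e') j = β j := fun e' => by
      simp [hαzero e' j hjPE]
    simp only [hwdef, Pi.add_apply, Pi.sub_apply, Pi.smul_apply, smul_eq_mul, hβα,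
      ht00 j hj]
    ring
  have hgw : g ⬝ᵥ w = g ⬝ᵥ t e₀ := by
    simp only [hwdef]
    rw [dotProduct_add, dotProduct_sub, dotProduct_smul,
      dotProduct_smul, hgb e, hgb e₀]
    simp
  have hcw : (1 - g ⬝ᵥ w) • (β + α e) - w = c₀ := by
    rw [hgw, hc0def, hwdef]
    funext j
    simp only [Pi.add_apply, Pi.sub_apply, Pi.smul_apply, smul_eq_mul]
    ring
  have hweq : ∀ i : {x // x ∈ S}, (SX e *ᵥ w) i.val = SXY e i.val := by
    intro i
    have h1 := congrFun (hres e w) i.val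
    rw [hcw, hbNc0 e, ← hbNc0 e₀] at h1
    simp only [Pi.sub_apply, Pi.add_apply, Pi.smul_apply, smul_eq_mul] at h1
    have h2 := hres0 i
    linarith
  exact hchar e w hw0 hweq
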